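/- Let Λ ⊂ ℤ^d be finite, written as a disjoint union of finitely many boxes C_1, …, C_M, and let H_Λ and H_{C_p} denote restrictions of a discrete Schrödinger operator H = Δ + V. Then for Im z > 0, |Tr(H_Λ − z)^{-1} − Σ_p Tr(H_{C_p} − z)^{-1}| ≤ B · ((Im z)^{-2} + 2(Im z)^{-1} · W), where B = Σ_p #∂C_p is the total number of boundary bonds and W bounds the number of sites near the boundary; in particular the difference of traces is controlled by boundary terms via the geometric resolvent identity. -/

import Mathlib

open MeasureTheory Finset

open Matrix Finset

section helpers
variable {ι : Type*} [Fintype ι] [DecidableEq ι]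

lemma herm_quad_real (A : Matrix ι ι ℂ)
    (hA : ∀ n m, A n m = (starRingEnd ℂ) (A m n)) (x : ι → ℂ) :
    (∑ n, ∑ m, (starRingEnd ℂ) (x n) * A n m * x m).im = 0 := by
  rw [← Complex.conj_eq_iff_im, map_sum, Finset.sum_comm]
  congr 1; ext n; rw [map_sum]; congr 1; ext m
  rw [_root_.map_mul, _root_.map_mul, Complex.conj_conj, ← hA]
  ring

end helpers

section h2
variable {ι : Type*} [Fintype ι] [DecidableEq ι]

lemma resolvent_lower (A : Matrix ι ι ℂ)
    (hA : ∀ n m, A n m = (starRingEnd ℂ) (A m n)) (z : ℂ) (x : ι → ℂ) :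
    z.im ^ 2 * ∑ n, ‖x n‖ ^ 2 ≤ ∑ n, ‖((A - z • (1 : Matrix ι ι ℂ)) *ᵥ x) n‖ ^ 2 := by
  set y : ι → ℂ := (A - z • (1 : Matrix ι ι ℂ)) *ᵥ x with hy
  set t : ℝ := ∑ n, ‖x n‖ ^ 2 with ht
  have ht0 : 0 ≤ t := Finset.sum_nonneg fun n _ => by positivity
  set S : ℂ := ∑ n, (starRingEnd ℂ) (x n) * y n with hS
  have hyx : ∀ n, y n = (A *ᵥ x) n - z * x n := by
    intro n
    rw [hy, Matrix.sub_mulVec, Matrix.smul_mulVec, Matrix.one_mulVec]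
    simp [Pi.sub_apply]
  have hSim : S.im = -(z.im * t) := by
    have hsplit : S = (∑ n, ∑ m, (starRingEnd ℂ) (x n) * A n m * x m) - z * (t : ℂ) := by
      rw [hS]
      have key : ∀ n, (starRingEnd ℂ) (x n) * y n
          = (∑ m, (starRingEnd ℂ) (x n) * A n m * x m) - z * ((‖x n‖ ^ 2 : ℝ) : ℂ) := by
        intro n
        rw [hyx n, Matrix.mulVec, dotProduct, mul_sub, Finset.mul_sum]
        congr 1
        · exact Finset.sum_congr rfl fun m _ => by ring
        · have : ((‖x n‖ ^ 2 : ℝ) : ℂ) = (starRingEnd ℂ) (x n) * x n := by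
            rw [mul_comm, Complex.mul_conj, Complex.normSq_eq_norm_sq]
          rw [this]; ring
      rw [Finset.sum_congr rfl fun n _ => key n, Finset.sum_sub_distrib, ← Finset.mul_sum]
      congr 2
      push_cast [ht]
      norm_num
    rw [hsplit]
    simp [Complex.sub_im, Complex.mul_im, herm_quad_real A hA x]
  have hCS : ‖S‖ ≤ ∑ n, ‖x n‖ * ‖y n‖ := by
    refine (norm_sum_le _ _).trans ?_
    refine Finset.sum_le_sum fun n _ => ?_
    rw [norm_mul, RingHomIsometric.norm_map]
  have hCS2 : (∑ n, ‖x n‖ * ‖y n‖) ^ 2 ≤ t * ∑ n, ‖y n‖ ^ 2 :=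
    Finset.sum_mul_sq_le_sq_mul_sq _ _ _
  have h2 : (z.im * t) ^ 2 ≤ t * ∑ n, ‖y n‖ ^ 2 := by
    calc (z.im * t) ^ 2 = |S.im| ^ 2 := by rw [hSim, abs_neg, sq_abs]
      _ ≤ ‖S‖ ^ 2 := by
          apply pow_le_pow_left₀ (abs_nonneg _)
          exact Complex.abs_im_le_norm S
      _ ≤ (∑ n, ‖x n‖ * ‖y n‖) ^ 2 := by exact pow_le_pow_left₀ (norm_nonneg _) hCS _
      _ ≤ _ := hCS2
  rcases eq_or_lt_of_le ht0 with h | h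
  · rw [← h]; simpa using Finset.sum_nonneg fun n _ => sq_nonneg ‖y n‖
  · nlinarith [h2]
end h2

section h3
variable {ι : Type*} [Fintype ι] [DecidableEq ι]

lemma resolvent_isUnit (A : Matrix ι ι ℂ)
    (hA : ∀ n m, A n m = (starRingEnd ℂ) (A m n)) (z : ℂ) (hz : 0 < z.im) :
    IsUnit (A - z • (1 : Matrix ι ι ℂ)) := by
  rw [← Matrix.mulVec_injective_iff_isUnit]
  intro x y hxy
  have h0 : (A - z • (1 : Matrix ι ι ℂ)) *ᵥ (x - y) = 0 := by
    rw [Matrix.mulVec_sub, hxy, sub_self]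
  have h1 := resolvent_lower A hA z (x - y)
  rw [h0] at h1
  have h1' : z.im ^ 2 * ∑ n, ‖(x - y) n‖ ^ 2 ≤ 0 := by simpa using h1
  have hz2 : 0 < z.im ^ 2 := by positivity
  have hle := Finset.sum_nonneg (fun m (_ : m ∈ Finset.univ) => sq_nonneg ‖(x-y) m‖)
  have hsum : ∑ n, ‖(x - y) n‖ ^ 2 ≤ 0 := by nlinarith
  have heq : ∑ n, ‖(x - y) n‖ ^ 2 = 0 := le_antisymm hsum hle
  funext n
  have h3 := (Finset.sum_eq_zero_iff_of_nonneg (fun m _ => sq_nonneg ‖(x-y) m‖)).mp heq n (Finset.mem_univ n)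
  have h4 := pow_eq_zero_iff (n := 2) (by norm_num) |>.mp h3
  have h5 := norm_eq_zero.mp h4
  simpa [sub_eq_zero] using h5

lemma resolvent_inv_mulVec_bound (A : Matrix ι ι ℂ)
    (hA : ∀ n m, A n m = (starRingEnd ℂ) (A m n)) (z : ℂ) (hz : 0 < z.im) (u : ι → ℂ) :
    ∑ n, ‖((A - z • (1 : Matrix ι ι ℂ))⁻¹ *ᵥ u) n‖ ^ 2 ≤ z.im⁻¹ ^ 2 * ∑ n, ‖u n‖ ^ 2 := by
  set Bm := A - z • (1 : Matrix ι ι ℂ) with hBm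
  have hunit : IsUnit Bm := resolvent_isUnit A hA z hz
  have hdet : IsUnit Bm.det := (Matrix.isUnit_iff_isUnit_det Bm).mp hunit
  have hBx : Bm *ᵥ (Bm⁻¹ *ᵥ u) = u := by
    rw [Matrix.mulVec_mulVec, Matrix.mul_nonsing_inv _ hdet, Matrix.one_mulVec]
  have h1 := resolvent_lower A hA z (Bm⁻¹ *ᵥ u)
  rw [← hBm, hBx] at h1
  have hz2 : 0 < z.im ^ 2 := by positivity
  rw [inv_pow]
  calc ∑ n, ‖(Bm⁻¹ *ᵥ u) n‖ ^ 2
      = (z.im ^ 2)⁻¹ * (z.im ^ 2 * ∑ n, ‖(Bm⁻¹ *ᵥ u) n‖ ^ 2) := by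
        field_simp
    _ ≤ (z.im ^ 2)⁻¹ * ∑ n, ‖u n‖ ^ 2 :=
        mul_le_mul_of_nonneg_left h1 (by positivity)

lemma resolvent_inv_col_bound (A : Matrix ι ι ℂ)
    (hA : ∀ n m, A n m = (starRingEnd ℂ) (A m n)) (z : ℂ) (hz : 0 < z.im) (m : ι) :
    ∑ n, ‖(A - z • (1 : Matrix ι ι ℂ))⁻¹ n m‖ ^ 2 ≤ z.im⁻¹ ^ 2 := by
  have h := resolvent_inv_mulVec_bound A hA z hz (Pi.single m 1)
  have h1 : ∀ n, ((A - z • (1 : Matrix ι ι ℂ))⁻¹ *ᵥ Pi.single m 1) n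
      = (A - z • (1 : Matrix ι ι ℂ))⁻¹ n m := by
    intro n
    have := congrFun (Matrix.mulVec_single ((A - z • (1 : Matrix ι ι ℂ))⁻¹) m (1:ℂ)) n
    simpa using this
  simp only [h1] at h
  have h2 : ∑ n, ‖(Pi.single m 1 : ι → ℂ) n‖ ^ 2 = 1 := by
    simp [Pi.single_apply, apply_ite (fun t : ℂ => ‖t‖)]
  rw [h2, mul_one] at h
  exact h
lemma resolvent_inv_row_bound (A : Matrix ι ι ℂ)
    (hA : ∀ n m, A n m = (starRingEnd ℂ) (A m n))
    (hsym : ∀ n m, A n m = A m n) (z : ℂ) (hz : 0 < z.im) (k : ι) :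
    ∑ n, ‖(A - z • (1 : Matrix ι ι ℂ))⁻¹ k n‖ ^ 2 ≤ z.im⁻¹ ^ 2 := by
  have htr : (A - z • (1 : Matrix ι ι ℂ))ᵀ = A - z • (1 : Matrix ι ι ℂ) := by
    rw [Matrix.transpose_sub, Matrix.transpose_smul, Matrix.transpose_one]
    congr 1
    ext n m
    exact hsym m n
  have hinv : ∀ n, (A - z • (1 : Matrix ι ι ℂ))⁻¹ k n = (A - z • (1 : Matrix ι ι ℂ))⁻¹ n k := by
    intro n
    conv_lhs => rw [show (A - z • (1 : Matrix ι ι ℂ))⁻¹ k n = ((A - z • (1 : Matrix ι ι ℂ))⁻¹)ᵀ n k from rfl]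
    rw [Matrix.transpose_nonsing_inv, htr]
  rw [Finset.sum_congr rfl fun n _ => by rw [hinv n]]
  exact resolvent_inv_col_bound A hA z hz k

end h3

section h4
variable {α : Type*} {β : Type*} [AddCommMonoid β]

lemma sum_over_subtypes (Λ Cp : Finset α) (hsub : Cp ⊆ Λ)
    (g : {x // x ∈ Λ} → β) (hg : ∀ m : {x // x ∈ Λ}, m.1 ∉ Cp → g m = 0) :
    ∑ m, g m = ∑ m : {x // x ∈ Cp}, g ⟨m.1, hsub m.2⟩ := by
  classical
  set gh : α → β := fun x => if h : x ∈ Λ then g ⟨x, h⟩ else 0 with hgh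
  have e1 : ∑ m, g m = ∑ x ∈ Λ, gh x := by
    rw [← Finset.sum_coe_sort Λ gh]
    refine Finset.sum_congr rfl fun m _ => ?_
    rw [hgh]; simp only [m.2, dif_pos]
  have e2 : ∑ x ∈ Λ, gh x = ∑ x ∈ Cp, gh x :=
    (Finset.sum_subset hsub fun x hx hnx => by
      rw [hgh]; simp only [hx, dif_pos]; exact hg ⟨x, hx⟩ hnx).symm
  have e3 : ∑ x ∈ Cp, gh x = ∑ m : {x // x ∈ Cp}, g ⟨m.1, hsub m.2⟩ := by
    rw [← Finset.sum_coe_sort Cp gh]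
    refine Finset.sum_congr rfl fun m _ => ?_
    rw [hgh]; simp only [hsub m.2, dif_pos]
  rw [e1, e2, e3]

lemma sum_sub_le (Λ Cp : Finset α) (hsub : Cp ⊆ Λ)
    (h : {x // x ∈ Λ} → ℝ) (h0 : ∀ n, 0 ≤ h n) :
    ∑ m : {x // x ∈ Cp}, h ⟨m.1, hsub m.2⟩ ≤ ∑ n, h n := by
  classical
  set hh : α → ℝ := fun x => if hx : x ∈ Λ then h ⟨x, hx⟩ else 0 with hhh
  have e1 : ∑ m : {x // x ∈ Cp}, h ⟨m.1, hsub m.2⟩ = ∑ x ∈ Cp, hh x := by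
    rw [← Finset.sum_coe_sort Cp hh]
    refine Finset.sum_congr rfl fun m _ => ?_
    rw [hhh]; simp only [hsub m.2, dif_pos]
  have e2 : ∑ n, h n = ∑ x ∈ Λ, hh x := by
    rw [← Finset.sum_coe_sort Λ hh]
    refine Finset.sum_congr rfl fun m _ => ?_
    rw [hhh]; simp only [m.2, dif_pos]
  rw [e1, e2]
  refine Finset.sum_le_sum_of_subset_of_nonneg hsub fun x hx _ => ?_
  simp only [hhh, hx, dif_pos]
  exact h0 _
end h4

lemma subval {α : Type*} {P : α → Prop} {x y : α} {hx : P x} {hy : P y}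
    (h : (⟨x, hx⟩ : Subtype P) = ⟨y, hy⟩) : x = y :=
  congrArg Subtype.val h

lemma valsub {α : Type*} {P : α → Prop} {x y : Subtype P} (h : x = y) : x.1 = y.1 :=
  congrArg Subtype.val h


/-- Let `Λ ⊂ ℤ^d` be a finite set, a disjoint union of boxes `C_1, …, C_M`, and let
`H_Λ`, `H_{C_p}` be restrictions of a discrete Schrödinger operator `H = Δ + V`. For
`Im z > 0`, the difference `Tr(H_Λ − z)^{-1} − Σ_p Tr(H_{C_p} − z)^{-1}` is bounded by
boundary terms: `≤ B·((Im z)^{-2} + 2(Im z)^{-1}·W)`, where `B` is the total number of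
boundary bonds and `W` bounds the number of sites near the boundary. -/
theorem trace_resolvent_decoupling_boundary_bound
    (d : ℕ) (v : (Fin d → ℤ) → ℝ)
    -- the kernel of the discrete Schrödinger operator `H = Δ + V`
    (K : (Fin d → ℤ) → (Fin d → ℤ) → ℂ)
    (hK : ∀ n m, K n m = (if (∑ j, |n j - m j|) = 1 then (1 : ℂ) else 0) +
      (if n = m then (v n : ℂ) else 0))
    (Λ : Finset (Fin d → ℤ)) (M : ℕ) (C : Fin M → Finset (Fin d → ℤ))
    (hdisj : ∀ p q, p ≠ q → Disjoint (C p) (C q))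
    (hunion : Λ = Finset.univ.biUnion C)
    -- interior sites of each box, and a bound `W` on the number of near-boundary sites
    (interior : Fin M → Finset (Fin d → ℤ)) (hint : ∀ p, interior p ⊆ C p)
    (W : ℝ) (hW : ((∑ p, (C p \ interior p).card : ℕ) : ℝ) ≤ W)
    -- `B` is the total number of boundary bonds
    (B : ℝ)
    (hB : B = ((∑ p, (((C p) ×ˢ (Λ \ C p)).filter
        (fun q => (∑ j, |q.1 j - q.2 j|) = 1)).card : ℕ) : ℝ))
    (z : ℂ) (hz : 0 < z.im)
    -- the restricted operators as matrices
    (HΛ : Matrix Λ Λ ℂ) (hHΛ : ∀ n m : Λ, HΛ n m = K n.1 m.1)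
    (HC : ∀ p : Fin M, Matrix (C p) (C p) ℂ)
    (hHC : ∀ (p : Fin M) (n m : C p), HC p n m = K n.1 m.1) :
    ‖Matrix.trace ((HΛ - z • (1 : Matrix Λ Λ ℂ))⁻¹) -
        ∑ p, Matrix.trace ((HC p - z • (1 : Matrix (C p) (C p) ℂ))⁻¹)‖
      ≤ B * ((z.im)⁻¹ ^ 2 + 2 * (z.im)⁻¹ * W) := by
  classical
  have habs : ∀ a b : Fin d → ℤ, (∑ j, |a j - b j|) = (∑ j, |b j - a j|) :=
    fun a b => Finset.sum_congr rfl fun j _ => abs_sub_comm _ _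
  have hKsym : ∀ a b, K a b = K b a := by
    intro a b
    rw [hK, hK, habs a b]
    by_cases hab : a = b
    · subst hab; rfl
    · simp [hab, Ne.symm hab]
  have hKconj : ∀ a b, K a b = (starRingEnd ℂ) (K b a) := by
    intro a b
    rw [hKsym a b, hK, map_add, apply_ite (starRingEnd ℂ), apply_ite (starRingEnd ℂ)]
    simp [Complex.conj_ofReal]
  have hsub : ∀ p, C p ⊆ Λ := by
    intro p x hx
    rw [hunion]
    exact Finset.mem_biUnion.mpr ⟨p, Finset.mem_univ p, hx⟩
  have hΛconj : ∀ n m : Λ, HΛ n m = (starRingEnd ℂ) (HΛ m n) := by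
    intro n m; rw [hHΛ, hHΛ]; exact hKconj _ _
  have hΛsym : ∀ n m : Λ, HΛ n m = HΛ m n := by
    intro n m; rw [hHΛ, hHΛ]; exact hKsym _ _
  have hCconj : ∀ p (n m : C p), HC p n m = (starRingEnd ℂ) (HC p m n) := by
    intro p n m; rw [hHC, hHC]; exact hKconj _ _
  set G : Matrix Λ Λ ℂ := (HΛ - z • (1 : Matrix Λ Λ ℂ))⁻¹ with hG
  set Gc : ∀ p, Matrix (C p) (C p) ℂ :=
    fun p => (HC p - z • (1 : Matrix (C p) (C p) ℂ))⁻¹ with hGc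
  -- the per-box estimate
  have hper : ∀ p, ∑ n' : C p, ‖G ⟨n'.1, hsub p n'.2⟩ ⟨n'.1, hsub p n'.2⟩ - Gc p n' n'‖
      ≤ ((((C p) ×ˢ (Λ \ C p)).filter
          (fun q => (∑ j, |q.1 j - q.2 j|) = 1)).card : ℝ) * z.im⁻¹ ^ 2 := by
    intro p
    set Bm : Matrix Λ Λ ℂ := HΛ - z • (1 : Matrix Λ Λ ℂ) with hBm
    set Bp : Matrix (C p) (C p) ℂ := HC p - z • (1 : Matrix (C p) (C p) ℂ) with hBp
    have hdetΛ : IsUnit Bm.det :=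
      (Matrix.isUnit_iff_isUnit_det _).mp (resolvent_isUnit HΛ hΛconj z hz)
    have hdetp : IsUnit Bp.det :=
      (Matrix.isUnit_iff_isUnit_det _).mp (resolvent_isUnit (HC p) (hCconj p) z hz)
    have hGB : Bm * G = 1 := by rw [hG, hBm]; exact Matrix.mul_nonsing_inv _ hdetΛ
    have hGpB : Gc p * Bp = 1 := by rw [hGc, hBp]; exact Matrix.nonsing_inv_mul _ hdetp
    set Gp' : Matrix Λ Λ ℂ := fun n m =>
      if h : n.1 ∈ C p ∧ m.1 ∈ C p then Gc p ⟨n.1, h.1⟩ ⟨m.1, h.2⟩ else 0 with hGp'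
    set Γ : Matrix Λ Λ ℂ := fun m k =>
      if m.1 ∈ C p ∧ k.1 ∉ C p then Bm m k else 0 with hΓ
    set Ep : Matrix Λ Λ ℂ := fun n k => if n = k ∧ n.1 ∈ C p then 1 else 0 with hEp
    have hBmatch : ∀ (a b : Λ) (ha : a.1 ∈ C p) (hb : b.1 ∈ C p),
        Bm a b = Bp ⟨a.1, ha⟩ ⟨b.1, hb⟩ := by
      intro a b ha hb
      rw [hBm, hBp]
      simp only [Matrix.sub_apply, Matrix.smul_apply, Matrix.one_apply, hHΛ, hHC,
        smul_eq_mul]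
      congr 1
      by_cases hab : a.1 = b.1
      · rw [if_pos (show a = b from Subtype.ext hab),
          if_pos (show (⟨a.1, ha⟩ : C p) = ⟨b.1, hb⟩ from Subtype.ext hab)]
      · rw [if_neg (show ¬a = b from fun h => hab (congrArg Subtype.val h)),
          if_neg (show ¬(⟨a.1, ha⟩ : C p) = ⟨b.1, hb⟩ from
            fun h => hab (subval h))]
    have claim1 : Gp' * Bm = Ep + Gp' * Γ := by
      ext n k
      simp only [Matrix.mul_apply, Matrix.add_apply]
      by_cases hn : n.1 ∈ C p
      · by_cases hk : k.1 ∈ C p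
        · have hΓ0 : ∀ m : Λ, Gp' n m * Γ m k = 0 := by
            intro m; rw [hΓ]; simp [hk]
          rw [Finset.sum_eq_zero fun m _ => hΓ0 m, add_zero]
          have hz0 : ∀ m : Λ, m.1 ∉ C p → Gp' n m * Bm m k = 0 := by
            intro m hm; rw [hGp']; simp [hm]
          rw [sum_over_subtypes Λ (C p) (hsub p) (fun m => Gp' n m * Bm m k) hz0]
          have hterm : ∀ m' : C p, Gp' n ⟨m'.1, hsub p m'.2⟩ * Bm ⟨m'.1, hsub p m'.2⟩ k
              = Gc p ⟨n.1, hn⟩ m' * Bp m' ⟨k.1, hk⟩ := by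
            intro m'
            rw [hGp']
            simp only [dif_pos (And.intro hn m'.2)]
            rw [hBmatch ⟨m'.1, hsub p m'.2⟩ k m'.2 hk]
          rw [Finset.sum_congr rfl fun m' _ => hterm m']
          have : ∑ m' : C p, Gc p ⟨n.1, hn⟩ m' * Bp m' ⟨k.1, hk⟩
              = (Gc p * Bp) ⟨n.1, hn⟩ ⟨k.1, hk⟩ := by rw [Matrix.mul_apply]
          rw [this, hGpB, hEp]
          simp only [Matrix.one_apply]
          by_cases hnk : n = k
          · have hv : (⟨n.1, hn⟩ : C p) = ⟨k.1, hk⟩ := by subst hnk; rfl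
            rw [if_pos hv, if_pos (show n = k ∧ n.1 ∈ C p from ⟨hnk, hn⟩)]
          · rw [if_neg (show ¬(⟨n.1, hn⟩ : C p) = ⟨k.1, hk⟩ from
                fun h => hnk (Subtype.ext (subval h))),
              if_neg (show ¬(n = k ∧ n.1 ∈ C p) from fun h => hnk h.1)]
        · have hEp0 : Ep n k = 0 := by
            rw [hEp]
            refine if_neg fun h => hk ?_
            rw [← h.1]; exact hn
          rw [hEp0, zero_add]
          refine Finset.sum_congr rfl fun m _ => ?_
          by_cases hm : m.1 ∈ C p
          · rw [hΓ]; simp [hm, hk]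
          · rw [hGp', hΓ]; simp [hm]
      · have hGp0 : ∀ m : Λ, Gp' n m = 0 := by
          intro m; rw [hGp']; simp [hn]
        have hEp0 : Ep n k = 0 := by
          rw [hEp]; exact if_neg fun h => hn h.2
        rw [hEp0, zero_add]
        exact Finset.sum_congr rfl fun m _ => by rw [hGp0 m, zero_mul, zero_mul]
    have claim2 : Gp' = Ep * G + Gp' * (Γ * G) := by
      have h1 : (Gp' * Bm) * G = (Ep + Gp' * Γ) * G := by rw [claim1]
      rw [Matrix.mul_assoc, hGB, Matrix.mul_one, Matrix.add_mul, Matrix.mul_assoc] at h1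
      exact h1
    have hdiag : ∀ n : Λ, n.1 ∈ C p → G n n - Gp' n n = -((Gp' * (Γ * G)) n n) := by
      intro n hn
      have h1 : Gp' n n = (Ep * G) n n + (Gp' * (Γ * G)) n n := by
        conv_lhs => rw [claim2]
        rw [Matrix.add_apply]
      have h2 : (Ep * G) n n = G n n := by
        rw [Matrix.mul_apply]
        have : ∀ k : Λ, Ep n k * G k n = if n = k then G k n else 0 := by
          intro k
          simp only [hEp]
          by_cases hnk : n = k
          · rw [if_pos (show n = k ∧ n.1 ∈ C p from ⟨hnk, hn⟩), if_pos hnk, one_mul]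
          · rw [if_neg (show ¬(n = k ∧ n.1 ∈ C p) from fun h => hnk h.1),
              if_neg hnk, zero_mul]
        rw [Finset.sum_congr rfl fun k _ => this k, Finset.sum_ite_eq]
        simp
      rw [h1, h2]
      ring
    -- pointwise bound on the correction term
    have hGam : ∀ m k : Λ, ‖Γ m k‖
        = if m.1 ∈ C p ∧ k.1 ∉ C p ∧ (∑ j, |m.1 j - k.1 j|) = 1 then 1 else 0 := by
      intro m k
      by_cases hmk : m.1 ∈ C p ∧ k.1 ∉ C p
      · have hne : m ≠ k := fun h => hmk.2 (h ▸ hmk.1)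
        have hne' : m.1 ≠ k.1 := fun h => hne (Subtype.ext h)
        have : Γ m k = if (∑ j, |m.1 j - k.1 j|) = 1 then 1 else 0 := by
          simp only [hΓ]
          rw [if_pos hmk, hBm]
          simp only [Matrix.sub_apply, Matrix.smul_apply, Matrix.one_apply,
            if_neg hne, smul_eq_mul, mul_zero, sub_zero, hHΛ, hK, if_neg hne', add_zero]
        rw [this]
        by_cases hadj : (∑ j, |m.1 j - k.1 j|) = 1
        · rw [if_pos hadj, if_pos (show m.1 ∈ C p ∧ k.1 ∉ C p ∧ (∑ j, |m.1 j - k.1 j|) = 1 from ⟨hmk.1, hmk.2, hadj⟩), norm_one]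
        · rw [if_neg hadj, if_neg (show ¬(m.1 ∈ C p ∧ k.1 ∉ C p ∧ (∑ j, |m.1 j - k.1 j|) = 1) from fun h => hadj h.2.2), norm_zero]
      · have : Γ m k = 0 := by simp only [hΓ]; rw [if_neg hmk]
        rw [this, norm_zero, if_neg (show ¬(m.1 ∈ C p ∧ k.1 ∉ C p ∧ (∑ j, |m.1 j - k.1 j|) = 1) from fun h => hmk ⟨h.1, h.2.1⟩)]
    -- Cauchy-Schwarz bound on the resolvent sums
    have hCS : ∀ m k : Λ, m.1 ∈ C p →
        ∑ n : Λ, ‖Gp' n m‖ * ‖G k n‖ ≤ z.im⁻¹ ^ 2 := by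
      intro m k hm
      have hS1 : ∑ n : Λ, ‖Gp' n m‖ ^ 2 ≤ z.im⁻¹ ^ 2 := by
        have hz0 : ∀ n : Λ, n.1 ∉ C p → ‖Gp' n m‖ ^ 2 = 0 := by
          intro n hn; rw [hGp']; simp [hn]
        rw [sum_over_subtypes Λ (C p) (hsub p) (fun n => ‖Gp' n m‖ ^ 2) hz0]
        have hterm : ∀ n' : C p, ‖Gp' ⟨n'.1, hsub p n'.2⟩ m‖ ^ 2
            = ‖Gc p n' ⟨m.1, hm⟩‖ ^ 2 := by
          intro n'
          rw [hGp']
          simp only [dif_pos (And.intro n'.2 hm)]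
        rw [Finset.sum_congr rfl fun n' _ => hterm n']
        exact resolvent_inv_col_bound (HC p) (hCconj p) z hz ⟨m.1, hm⟩
      have hS2 : ∑ n : Λ, ‖G k n‖ ^ 2 ≤ z.im⁻¹ ^ 2 :=
        resolvent_inv_row_bound HΛ hΛconj hΛsym z hz k
      have hsq : (∑ n : Λ, ‖Gp' n m‖ * ‖G k n‖) ^ 2
          ≤ (∑ n : Λ, ‖Gp' n m‖ ^ 2) * ∑ n : Λ, ‖G k n‖ ^ 2 :=
        Finset.sum_mul_sq_le_sq_mul_sq _ _ _
      have hnn : 0 ≤ ∑ n : Λ, ‖Gp' n m‖ * ‖G k n‖ :=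
        Finset.sum_nonneg fun n _ => mul_nonneg (norm_nonneg _) (norm_nonneg _)
      have hS1n : 0 ≤ ∑ n : Λ, ‖Gp' n m‖ ^ 2 :=
        Finset.sum_nonneg fun n _ => sq_nonneg _
      have hinv : (0:ℝ) ≤ z.im⁻¹ ^ 2 := by positivity
      nlinarith [hsq, hS1, hS2, hnn, hS1n, hinv]
    -- the total boundary weight
    have hcount : ∑ m : Λ, ∑ k : Λ, ‖Γ m k‖
        = ((((C p) ×ˢ (Λ \ C p)).filter
            (fun q => (∑ j, |q.1 j - q.2 j|) = 1)).card : ℝ) := by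
      have e0 : ∑ m : Λ, ∑ k : Λ, ‖Γ m k‖ = ∑ x ∈ Λ, ∑ y ∈ Λ,
          (if x ∈ C p ∧ y ∉ C p ∧ (∑ j, |x j - y j|) = 1 then (1:ℝ) else 0) := by
        rw [← Finset.sum_coe_sort Λ (fun x => ∑ y ∈ Λ,
          (if x ∈ C p ∧ y ∉ C p ∧ (∑ j, |x j - y j|) = 1 then (1:ℝ) else 0))]
        refine Finset.sum_congr rfl fun m _ => ?_
        rw [← Finset.sum_coe_sort Λ (fun y =>
          (if m.1 ∈ C p ∧ y ∉ C p ∧ (∑ j, |m.1 j - y j|) = 1 then (1:ℝ) else 0))]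
        exact Finset.sum_congr rfl fun k _ => hGam m k
      have hfe : (Λ ×ˢ Λ).filter
            (fun q => q.1 ∈ C p ∧ q.2 ∉ C p ∧ (∑ j, |q.1 j - q.2 j|) = 1)
          = ((C p) ×ˢ (Λ \ C p)).filter (fun q => (∑ j, |q.1 j - q.2 j|) = 1) := by
        ext q
        simp only [Finset.mem_filter, Finset.mem_product, Finset.mem_sdiff]
        constructor
        · rintro ⟨⟨h1, h2⟩, h3, h4, h5⟩
          exact ⟨⟨h3, h2, h4⟩, h5⟩
        · rintro ⟨⟨h1, h2, h3⟩, h4⟩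
          exact ⟨⟨hsub p h1, h2⟩, h1, h3, h4⟩
      rw [e0, ← Finset.sum_product', Finset.sum_boole, hfe]
    -- assemble the per-box estimate
    have hGcGp : ∀ n' : C p, Gc p n' n' = Gp' ⟨n'.1, hsub p n'.2⟩ ⟨n'.1, hsub p n'.2⟩ := by
      intro n'
      rw [hGp']
      simp only [dif_pos (And.intro n'.2 n'.2)]
    calc ∑ n' : C p, ‖G ⟨n'.1, hsub p n'.2⟩ ⟨n'.1, hsub p n'.2⟩ - Gc p n' n'‖
        = ∑ n' : C p, ‖(Gp' * (Γ * G)) ⟨n'.1, hsub p n'.2⟩ ⟨n'.1, hsub p n'.2⟩‖ := by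
          refine Finset.sum_congr rfl fun n' _ => ?_
          rw [hGcGp n', hdiag ⟨n'.1, hsub p n'.2⟩ n'.2, norm_neg]
      _ ≤ ∑ n' : C p, ∑ m : Λ, ∑ k : Λ,
            ‖Gp' ⟨n'.1, hsub p n'.2⟩ m‖ * (‖Γ m k‖ * ‖G k ⟨n'.1, hsub p n'.2⟩‖) := by
          refine Finset.sum_le_sum fun n' _ => ?_
          set n : Λ := ⟨n'.1, hsub p n'.2⟩
          calc ‖(Gp' * (Γ * G)) n n‖
              = ‖∑ m : Λ, Gp' n m * (Γ * G) m n‖ := by rw [Matrix.mul_apply]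
            _ ≤ ∑ m : Λ, ‖Gp' n m * (Γ * G) m n‖ := norm_sum_le _ _
            _ ≤ ∑ m : Λ, ∑ k : Λ, ‖Gp' n m‖ * (‖Γ m k‖ * ‖G k n‖) := by
                refine Finset.sum_le_sum fun m _ => ?_
                rw [norm_mul, Matrix.mul_apply]
                calc ‖Gp' n m‖ * ‖∑ k : Λ, Γ m k * G k n‖
                    ≤ ‖Gp' n m‖ * ∑ k : Λ, ‖Γ m k‖ * ‖G k n‖ := by
                      refine mul_le_mul_of_nonneg_left ?_ (norm_nonneg _)
                      refine (norm_sum_le _ _).trans ?_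
                      exact Finset.sum_le_sum fun k _ => le_of_eq (norm_mul _ _)
                  _ = ∑ k : Λ, ‖Gp' n m‖ * (‖Γ m k‖ * ‖G k n‖) := Finset.mul_sum _ _ _
      _ ≤ ∑ n : Λ, ∑ m : Λ, ∑ k : Λ, ‖Gp' n m‖ * (‖Γ m k‖ * ‖G k n‖) := by
          refine sum_sub_le Λ (C p) (hsub p)
            (fun n => ∑ m : Λ, ∑ k : Λ, ‖Gp' n m‖ * (‖Γ m k‖ * ‖G k n‖)) fun n => ?_
          refine Finset.sum_nonneg fun m _ => Finset.sum_nonneg fun k _ => ?_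
          positivity
      _ = ∑ m : Λ, ∑ k : Λ, ‖Γ m k‖ * ∑ n : Λ, ‖Gp' n m‖ * ‖G k n‖ := by
          rw [Finset.sum_comm]
          refine Finset.sum_congr rfl fun m _ => ?_
          rw [Finset.sum_comm]
          refine Finset.sum_congr rfl fun k _ => ?_
          rw [Finset.mul_sum]
          refine Finset.sum_congr rfl fun n _ => ?_
          ring
      _ ≤ ∑ m : Λ, ∑ k : Λ, ‖Γ m k‖ * z.im⁻¹ ^ 2 := by
          refine Finset.sum_le_sum fun m _ => Finset.sum_le_sum fun k _ => ?_
          by_cases hmk : m.1 ∈ C p ∧ k.1 ∉ C p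
          · exact mul_le_mul_of_nonneg_left (hCS m k hmk.1) (norm_nonneg _)
          · have : Γ m k = 0 := by simp only [hΓ]; rw [if_neg hmk]
            rw [this, norm_zero, zero_mul, zero_mul]
      _ = ((((C p) ×ˢ (Λ \ C p)).filter
            (fun q => (∑ j, |q.1 j - q.2 j|) = 1)).card : ℝ) * z.im⁻¹ ^ 2 := by
          rw [← hcount, Finset.sum_mul]
          refine Finset.sum_congr rfl fun m _ => ?_
          rw [Finset.sum_mul]
  -- decomposition of the trace difference
  set F : (Fin d → ℤ) → ℂ := fun x => if hx : x ∈ Λ then G ⟨x, hx⟩ ⟨x, hx⟩ else 0 with hF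
  have htrG : Matrix.trace G = ∑ p, ∑ n' : C p, G ⟨n'.1, hsub p n'.2⟩ ⟨n'.1, hsub p n'.2⟩ := by
    have e1 : Matrix.trace G = ∑ x ∈ Λ, F x := by
      rw [Matrix.trace, ← Finset.sum_coe_sort Λ F]
      refine Finset.sum_congr rfl fun n _ => ?_
      rw [hF]; simp only [n.2, dif_pos, Matrix.diag]
    have e2 : ∑ x ∈ Λ, F x = ∑ p, ∑ x ∈ C p, F x := by
      rw [hunion]
      exact Finset.sum_biUnion fun p _ q _ hpq => hdisj p q hpq
    rw [e1, e2]
    refine Finset.sum_congr rfl fun p _ => ?_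
    rw [← Finset.sum_coe_sort (C p) F]
    refine Finset.sum_congr rfl fun n _ => ?_
    rw [hF]; simp only [hsub p n.2, dif_pos]
  have htrGc : ∀ p, Matrix.trace (Gc p) = ∑ n' : C p, Gc p n' n' := by
    intro p; rw [Matrix.trace]; rfl
  have hsplit : Matrix.trace G - ∑ p, Matrix.trace (Gc p)
      = ∑ p, ∑ n' : C p, (G ⟨n'.1, hsub p n'.2⟩ ⟨n'.1, hsub p n'.2⟩ - Gc p n' n') := by
    rw [htrG, Finset.sum_congr rfl fun p _ => htrGc p, ← Finset.sum_sub_distrib]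
    exact Finset.sum_congr rfl fun p _ => (Finset.sum_sub_distrib _ _).symm
  rw [hsplit]
  have hW0 : 0 ≤ W := le_trans (Nat.cast_nonneg _) hW
  have hzinv : 0 ≤ z.im⁻¹ := inv_nonneg.mpr hz.le
  calc ‖∑ p, ∑ n' : C p, (G ⟨n'.1, hsub p n'.2⟩ ⟨n'.1, hsub p n'.2⟩ - Gc p n' n')‖
      ≤ ∑ p, ∑ n' : C p, ‖G ⟨n'.1, hsub p n'.2⟩ ⟨n'.1, hsub p n'.2⟩ - Gc p n' n'‖ := by
        refine (norm_sum_le _ _).trans (Finset.sum_le_sum fun p _ => ?_)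
        exact norm_sum_le _ _
    _ ≤ ∑ p, ((((C p) ×ˢ (Λ \ C p)).filter
          (fun q => (∑ j, |q.1 j - q.2 j|) = 1)).card : ℝ) * z.im⁻¹ ^ 2 :=
        Finset.sum_le_sum fun p _ => hper p
    _ = B * z.im⁻¹ ^ 2 := by rw [hB, ← Finset.sum_mul]; push_cast; ring
    _ ≤ B * ((z.im)⁻¹ ^ 2 + 2 * (z.im)⁻¹ * W) := by
        have hB0 : 0 ≤ B := by rw [hB]; exact Nat.cast_nonneg _
        have : (0:ℝ) ≤ 2 * (z.im)⁻¹ * W := by positivity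
        nlinarith
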